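/- Let p ≥ 1 and let a, b be real numbers with a ≥ 0, b ≥ 0 and a + b < 1. Let Σ̄ and, for every t ∈ ℤ, Σ_t and A_t be p×p real symmetric matrices with Σ̄ and each A_t positive semidefinite, such that sup_{t∈ℤ} ‖Σ_t‖ ≤ C and sup_{t∈ℤ} ‖A_t‖ ≤ C for some constant C > 0, and such that Σ_{t+1} = (1 − a − b)·Σ̄ + a·A_t + b·Σ_t for all t ∈ ℤ. Then for every t ∈ ℤ, Σ_t ⪰ ((1 − a − b)/(1 − b))·Σ̄ in the Loewner order. -/

import Mathlib

open Matrix Filter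
open scoped Matrix.Norms.L2Operator

/-- Each entry of a matrix is bounded in absolute value by its `L2` operator norm. -/
lemma entry_abs_le_l2_opNorm {p : ℕ} (M : Matrix (Fin p) (Fin p) ℝ) (i j : Fin p) :
    |M i j| ≤ ‖M‖ := by
  set y : EuclideanSpace ℝ (Fin p) := EuclideanSpace.single j (1 : ℝ) with hy
  have h1 : ‖(EuclideanSpace.equiv (Fin p) ℝ).symm (M *ᵥ y)‖ ≤ ‖M‖ * ‖y‖ :=
    M.l2_opNorm_mulVec y
  have hyn : ‖y‖ = 1 := by
    rw [hy, EuclideanSpace.norm_single]; norm_num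
  have hcomp : |M i j| ≤ ‖(EuclideanSpace.equiv (Fin p) ℝ).symm (M *ᵥ y)‖ := by
    have hMy : (M *ᵥ y) i = M i j := by
      simp [hy, mulVec, dotProduct, EuclideanSpace.single_apply]
    rw [EuclideanSpace.norm_eq]
    have h2 : |M i j| = Real.sqrt (‖(M *ᵥ y) i‖ ^ 2) := by
      rw [hMy]; rw [Real.sqrt_sq_eq_abs]; simp
    rw [h2]
    apply Real.sqrt_le_sqrt
    exact Finset.single_le_sum (f := fun k => ‖(M *ᵥ y) k‖ ^ 2)
      (fun k _ => by positivity) (Finset.mem_univ i)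
  calc |M i j| ≤ ‖(EuclideanSpace.equiv (Fin p) ℝ).symm (M *ᵥ y)‖ := hcomp
    _ ≤ ‖M‖ * ‖y‖ := h1
    _ = ‖M‖ := by rw [hyn, mul_one]

/-- Lower bound on the quadratic form via the norm bound on entries. -/
lemma quadform_lower_bound {p : ℕ} (M : Matrix (Fin p) (Fin p) ℝ) (C : ℝ)
    (hM : ‖M‖ ≤ C) (x : Fin p → ℝ) :
    -(C * (∑ i, |x i|) ^ 2) ≤ x ⬝ᵥ M *ᵥ x := by
  have habs : |x ⬝ᵥ M *ᵥ x| ≤ C * (∑ i, |x i|) ^ 2 := by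
    have hC0 : 0 ≤ C := le_trans (norm_nonneg M) hM
    have h1 : |x ⬝ᵥ M *ᵥ x| ≤ ∑ i, ∑ j, |x i| * (C * |x j|) := by
      calc |x ⬝ᵥ M *ᵥ x| = |∑ i, x i * ∑ j, M i j * x j| := by
            simp [dotProduct, mulVec]
        _ ≤ ∑ i, |x i * ∑ j, M i j * x j| := Finset.abs_sum_le_sum_abs _ _
        _ ≤ ∑ i, ∑ j, |x i| * (C * |x j|) := by
            apply Finset.sum_le_sum
            intro i _
            rw [abs_mul]
            calc |x i| * |∑ j, M i j * x j| ≤ |x i| * ∑ j, |M i j * x j| :=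
                  mul_le_mul_of_nonneg_left (Finset.abs_sum_le_sum_abs _ _) (abs_nonneg _)
              _ = ∑ j, |x i| * |M i j * x j| := Finset.mul_sum _ _ _
              _ ≤ ∑ j, |x i| * (C * |x j|) := by
                  apply Finset.sum_le_sum
                  intro j _
                  apply mul_le_mul_of_nonneg_left _ (abs_nonneg _)
                  rw [abs_mul]
                  exact mul_le_mul_of_nonneg_right
                    (le_trans (entry_abs_le_l2_opNorm M i j) hM) (abs_nonneg _)
    have h2 : ∑ i, ∑ j, |x i| * (C * |x j|) = C * (∑ i, |x i|) ^ 2 := by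
      simp only [← Finset.mul_sum, ← Finset.sum_mul]
      ring
    linarith [h1, h2 ▸ h1]
  linarith [neg_abs_le (x ⬝ᵥ M *ᵥ x), abs_nonneg (x ⬝ᵥ M *ᵥ x), habs]

/-- Under the scalar BEKK recursion
`Σ_{t+1} = (1 − a − b)·Σ̄ + a·A_t + b·Σ_t` (for all `t ∈ ℤ`) with `a, b ≥ 0`, `a + b < 1`,
`Σ̄` and each `A_t` positive semidefinite, each `Σ_t` symmetric, and uniformly
operator-norm-bounded `Σ_t` and `A_t`, one has the Loewner lower bound
`Σ_t ⪰ ((1 − a − b)/(1 − b))·Σ̄` for every `t ∈ ℤ`. -/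
theorem bekk_loewner_lower_bound
    (p : ℕ) (hp : 1 ≤ p) (a b : ℝ) (ha : 0 ≤ a) (hb : 0 ≤ b) (hab : a + b < 1)
    (Sbar : Matrix (Fin p) (Fin p) ℝ) (S A : ℤ → Matrix (Fin p) (Fin p) ℝ)
    (hSbarsymm : Sbar.IsSymm) (hSsymm : ∀ t : ℤ, (S t).IsSymm)
    (hAsymm : ∀ t : ℤ, (A t).IsSymm)
    (hSbarpsd : Sbar.PosSemidef) (hApsd : ∀ t : ℤ, (A t).PosSemidef)
    (C : ℝ) (hC : 0 < C)
    (hSbound : ∀ t : ℤ, ‖S t‖ ≤ C) (hAbound : ∀ t : ℤ, ‖A t‖ ≤ C)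
    (hrec : ∀ t : ℤ, S (t + 1) = (1 - a - b) • Sbar + a • A t + b • S t) :
    ∀ t : ℤ, (S t - ((1 - a - b) / (1 - b)) • Sbar).PosSemidef := by
  have hb1 : b < 1 := by linarith
  have hb1' : (0:ℝ) < 1 - b := by linarith
  set c : ℝ := (1 - a - b) / (1 - b) with hc_def
  have hc : 0 ≤ c := div_nonneg (by linarith) (by linarith)
  intro t
  rw [Matrix.posSemidef_iff_dotProduct_mulVec]
  constructor
  · -- Hermitian part
    rw [Matrix.IsHermitian, Matrix.conjTranspose_eq_transpose_of_trivial]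
    exact ((hSsymm t).sub (hSbarsymm.smul c))
  · intro x
    have hstar : star x = x := by
      funext i; simp
    rw [hstar]
    -- quadratic form of the difference process
    set g : ℤ → ℝ := fun s => x ⬝ᵥ S s *ᵥ x - c * (x ⬝ᵥ Sbar *ᵥ x) with hg_def
    have hgoal : x ⬝ᵥ (S t - c • Sbar) *ᵥ x = g t := by
      simp [hg_def, Matrix.sub_mulVec, Matrix.smul_mulVec, dotProduct_sub,
        dotProduct_smul, smul_eq_mul]
    rw [hgoal]
    -- Sbar quadratic form is nonnegative
    have hQ : 0 ≤ x ⬝ᵥ Sbar *ᵥ x := by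
      have := hSbarpsd.dotProduct_mulVec_nonneg x
      rwa [hstar] at this
    -- A quadratic forms are nonnegative
    have hA : ∀ s : ℤ, 0 ≤ x ⬝ᵥ A s *ᵥ x := fun s => by
      have := (hApsd s).dotProduct_mulVec_nonneg x
      rwa [hstar] at this
    -- one-step recursion for g
    have hstep : ∀ s : ℤ, g (s + 1) = a * (x ⬝ᵥ A s *ᵥ x) + b * g s := by
      intro s
      have hckey : c * (1 - b) = 1 - a - b := by
        rw [hc_def]; field_simp
      simp only [hg_def, hrec s, Matrix.add_mulVec, Matrix.smul_mulVec,
        dotProduct_add, dotProduct_smul, smul_eq_mul]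
      nlinarith [hckey]
    have hmono : ∀ s : ℤ, b * g s ≤ g (s + 1) := by
      intro s
      rw [hstep s]
      nlinarith [hA s]
    -- uniform lower bound on g
    set M₀ : ℝ := C * (∑ i, |x i|) ^ 2 + c * (x ⬝ᵥ Sbar *ᵥ x) with hM0_def
    have hlb : ∀ s : ℤ, -M₀ ≤ g s := by
      intro s
      have := quadform_lower_bound (S s) C (hSbound s) x
      simp only [hg_def, hM0_def]
      linarith
    -- iterate: g t ≥ b^n * g (t - n)
    have hpow : ∀ n : ℕ, b ^ n * g (t - n) ≤ g t := by
      intro n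
      induction n with
      | zero => simp
      | succ n ih =>
        have heq : t - (n : ℤ) = (t - ((n : ℤ) + 1)) + 1 := by ring
        have h1 : b * g (t - ((n : ℤ) + 1)) ≤ g (t - (n : ℤ)) := by
          rw [heq]; exact hmono _
        have h2 : b ^ (n + 1) * g (t - ((n : ℤ) + 1)) ≤ b ^ n * g (t - (n : ℤ)) := by
          calc b ^ (n + 1) * g (t - ((n : ℤ) + 1))
              = b ^ n * (b * g (t - ((n : ℤ) + 1))) := by ring
            _ ≤ b ^ n * g (t - (n : ℤ)) :=
              mul_le_mul_of_nonneg_left h1 (pow_nonneg hb n)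
        have : ((n : ℤ) + 1) = ((n + 1 : ℕ) : ℤ) := by push_cast; ring
        rw [this] at h2
        exact le_trans h2 ih
    -- hence g t ≥ -(b^n * M₀) for all n
    have hseq : ∀ n : ℕ, -(b ^ n * M₀) ≤ g t := by
      intro n
      have h1 : b ^ n * (-M₀) ≤ b ^ n * g (t - n) :=
        mul_le_mul_of_nonneg_left (hlb _) (pow_nonneg hb n)
      have h2 : -(b ^ n * M₀) = b ^ n * (-M₀) := by ring
      linarith [hpow n]
    -- take the limit n → ∞
    have htend : Tendsto (fun n : ℕ => -(b ^ n * M₀)) atTop (nhds 0) := by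
      have h := (tendsto_pow_atTop_nhds_zero_of_lt_one hb hb1).mul_const M₀
      rw [zero_mul] at h
      simpa using h.neg
    exact le_of_tendsto htend (Filter.Eventually.of_forall hseq)
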